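/- For a finite strongly connected directed graph, any α∈[0,1), and distinct vertices x,y: κ_α(x,y)/(1−α) = inf over all 1-Lipschitz f of [ (1/(1−α))(1 − ∇_{xy}f) + ∇_{xy} ℒf ]. -/

import Mathlib

open Finset

variable {V : Type*} [Fintype V] [DecidableEq V]

/-- `π` is a coupling of `μ` and `ν`. -/
def IsCoupling (μ ν : V → ℝ) (π : V → V → ℝ) : Prop :=
  (∀ x y, 0 ≤ π x y) ∧ (∀ x, ∑ y, π x y = μ x) ∧ (∀ y, ∑ x, π x y = ν y)

/-- The L1-Wasserstein distance with cost `d`. -/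
noncomputable def W1 (d : V → V → ℝ) (μ ν : V → ℝ) : ℝ :=
  sInf {c | ∃ π, IsCoupling μ ν π ∧ c = ∑ x, ∑ y, π x y * d x y}

/-- The lazy distribution `μ_x^α`. -/
noncomputable def lazyDist (Pb : V → V → ℝ) (α : ℝ) (x : V) : V → ℝ :=
  fun z => if z = x then α else (1 - α) * Pb x z

/-- The `α`-Ricci curvature `κ_α(x,y) = 1 − W₁(μ_x^α, μ_y^α)/d(x,y)`. -/
noncomputable def kappaAlpha (d : V → V → ℝ) (Pb : V → V → ℝ) (α : ℝ) (x y : V) : ℝ :=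
  1 - W1 d (lazyDist Pb α x) (lazyDist Pb α y) / d x y

set_option linter.unusedSectionVars false
set_option linter.unusedVariables false
set_option maxHeartbeats 1000000
open Filter Topology

section Duality

variable (d : V → V → ℝ) (μ ν : V → ℝ)

lemma prod_coupling (hμ0 : ∀ v, 0 ≤ μ v) (hν0 : ∀ v, 0 ≤ ν v)
    (hμ1 : ∑ v, μ v = 1) (hν1 : ∑ v, ν v = 1) :
    IsCoupling μ ν (fun u v => μ u * ν v) := by
  refine ⟨fun u v => mul_nonneg (hμ0 u) (hν0 v), fun u => ?_, fun v => ?_⟩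
  · rw [← Finset.mul_sum, hν1, mul_one]
  · rw [← Finset.sum_mul, hμ1, one_mul]

lemma cost_set_nonempty (hμ0 : ∀ v, 0 ≤ μ v) (hν0 : ∀ v, 0 ≤ ν v)
    (hμ1 : ∑ v, μ v = 1) (hν1 : ∑ v, ν v = 1) :
    {c | ∃ π, IsCoupling μ ν π ∧ c = ∑ x, ∑ y, π x y * d x y}.Nonempty :=
  ⟨_, _, prod_coupling μ ν hμ0 hν0 hμ1 hν1, rfl⟩

lemma cost_set_bddBelow (hnn : ∀ x y, 0 ≤ d x y) :
    BddBelow {c | ∃ π, IsCoupling μ ν π ∧ c = ∑ x, ∑ y, π x y * d x y} := by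
  refine ⟨0, fun c hc => ?_⟩
  obtain ⟨π, hπ, rfl⟩ := hc
  exact Finset.sum_nonneg fun u _ => Finset.sum_nonneg fun v _ =>
    mul_nonneg (hπ.1 u v) (hnn u v)

lemma W1_le_cost (hnn : ∀ x y, 0 ≤ d x y) {π : V → V → ℝ} (hπ : IsCoupling μ ν π) :
    W1 d μ ν ≤ ∑ x, ∑ y, π x y * d x y :=
  csInf_le (cost_set_bddBelow d μ ν hnn) ⟨π, hπ, rfl⟩

lemma lip_sum_le_cost (f : V → ℝ) (hf : ∀ u v, f v - f u ≤ d u v)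
    {π : V → V → ℝ} (hπ : IsCoupling μ ν π) :
    (∑ v, f v * ν v) - (∑ u, f u * μ u) ≤ ∑ x, ∑ y, π x y * d x y := by
  have h1 : (∑ v, f v * ν v) = ∑ u, ∑ v, π u v * f v := by
    rw [Finset.sum_comm]
    refine Finset.sum_congr rfl fun v _ => ?_
    rw [← hπ.2.2 v, Finset.mul_sum]
    exact Finset.sum_congr rfl fun u _ => mul_comm _ _
  have h2 : (∑ u, f u * μ u) = ∑ u, ∑ v, π u v * f u := by
    refine Finset.sum_congr rfl fun u _ => ?_
    rw [← hπ.2.1 u, Finset.mul_sum]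
    exact Finset.sum_congr rfl fun v _ => mul_comm _ _
  rw [h1, h2, ← Finset.sum_sub_distrib]
  refine Finset.sum_le_sum fun u _ => ?_
  rw [← Finset.sum_sub_distrib]
  refine Finset.sum_le_sum fun v _ => ?_
  rw [← mul_sub]
  exact mul_le_mul_of_nonneg_left (hf u v) (hπ.1 u v)

/-- Weak duality. -/
lemma weak_duality [Nonempty V] (hnn : ∀ x y, 0 ≤ d x y)
    (hμ0 : ∀ v, 0 ≤ μ v) (hν0 : ∀ v, 0 ≤ ν v)
    (hμ1 : ∑ v, μ v = 1) (hν1 : ∑ v, ν v = 1)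
    (f : V → ℝ) (hf : ∀ u v, f v - f u ≤ d u v) :
    (∑ v, f v * ν v) - (∑ u, f u * μ u) ≤ W1 d μ ν := by
  refine le_csInf (cost_set_nonempty d μ ν hμ0 hν0 hμ1 hν1) ?_
  rintro c ⟨π, hπ, rfl⟩
  exact lip_sum_le_cost d μ ν f hf hπ

end Duality

lemma eval_continuous  {ι : Type*} [Fintype ι] (i : ι) :
    Continuous (fun z : EuclideanSpace ℝ ι => z i) :=
  (EuclideanSpace.proj i).continuous

noncomputable def Lmap (d : V → V → ℝ) :
    EuclideanSpace ℝ (V × V) →ₗ[ℝ] EuclideanSpace ℝ (V ⊕ V ⊕ Unit) where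
  toFun π := (WithLp.equiv 2 _).symm (fun j => match j with
    | Sum.inl u => ∑ v, π (u, v)
    | Sum.inr (Sum.inl v) => ∑ u, π (u, v)
    | Sum.inr (Sum.inr _) => ∑ u, ∑ v, π (u, v) * d u v)
  map_add' π π' := by
    ext j
    rcases j with u | v | _ <;>
      simp [Finset.sum_add_distrib, add_mul]
  map_smul' c π := by
    ext j
    rcases j with u | v | _ <;>
      simp [Finset.mul_sum, smul_eq_mul, mul_assoc]

lemma Lmap_apply_inl (d : V → V → ℝ) (π : EuclideanSpace ℝ (V × V)) (u : V) :
    Lmap d π (Sum.inl u) = ∑ v, π (u, v) := rfl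

lemma Lmap_apply_inrl (d : V → V → ℝ) (π : EuclideanSpace ℝ (V × V)) (v : V) :
    Lmap d π (Sum.inr (Sum.inl v)) = ∑ u, π (u, v) := rfl

lemma Lmap_apply_inrr (d : V → V → ℝ) (π : EuclideanSpace ℝ (V × V)) (z : Unit) :
    Lmap d π (Sum.inr (Sum.inr z)) = ∑ u, ∑ v, π (u, v) * d u v := rfl

noncomputable def orthant (ι : Type*) [Fintype ι] : ProperCone ℝ (EuclideanSpace ℝ ι) where
  toSubmodule :=
    { carrier := {π | ∀ i, 0 ≤ π i}
      add_mem' := fun hπ hσ i => add_nonneg (hπ i) (hσ i)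
      zero_mem' := fun i => le_refl 0
      smul_mem' := fun c π hπ i => by
        have : (c • π) i = (c : ℝ) * π i := rfl
        rw [this]
        exact mul_nonneg c.2 (hπ i) }
  isClosed' := by
    show IsClosed {π : EuclideanSpace ℝ ι | ∀ i, 0 ≤ π i}
    have : {π : EuclideanSpace ℝ ι | ∀ i, 0 ≤ π i} = ⋂ i, {π | 0 ≤ π i} := by
      ext π; simp [Set.mem_iInter]
    rw [this]
    exact isClosed_iInter fun i => isClosed_le continuous_const (eval_continuous i)

lemma mem_orthant {ι : Type*} [Fintype ι] (π : EuclideanSpace ℝ ι) :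
    π ∈ orthant ι ↔ ∀ i, 0 ≤ π i := Iff.rfl

open scoped InnerProductSpace in
lemma strong_duality [Nonempty V] (d : V → V → ℝ) (hnn : ∀ x y, 0 ≤ d x y)
    (hrefl : ∀ x, d x x = 0) (htri : ∀ x y z, d x z ≤ d x y + d y z)
    (μ ν : V → ℝ) (hμ0 : ∀ v, 0 ≤ μ v) (hν0 : ∀ v, 0 ≤ ν v)
    (hμ1 : ∑ v, μ v = 1) (hν1 : ∑ v, ν v = 1)
    {ε : ℝ} (hε : 0 < ε) :
    ∃ f : V → ℝ, (∀ u v, f v - f u ≤ d u v) ∧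
      W1 d μ ν - ε ≤ (∑ v, f v * ν v) - (∑ u, f u * μ u) := by
  classical
  set L : EuclideanSpace ℝ (V × V) →L[ℝ] EuclideanSpace ℝ (V ⊕ V ⊕ Unit) :=
    LinearMap.toContinuousLinearMap (Lmap d) with hLdef
  have hLapp : ∀ π, L π = Lmap d π := fun π => rfl
  set b : EuclideanSpace ℝ (V ⊕ V ⊕ Unit) := (WithLp.equiv 2 _).symm (fun j => match j with
    | Sum.inl u => μ u
    | Sum.inr (Sum.inl v) => ν v
    | Sum.inr (Sum.inr _) => W1 d μ ν - ε) with hbdef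
  have hb1 : ∀ u, b (Sum.inl u) = μ u := fun u => rfl
  have hb2 : ∀ v, b (Sum.inr (Sum.inl v)) = ν v := fun v => rfl
  have hb3 : b (Sum.inr (Sum.inr ())) = W1 d μ ν - ε := rfl
  -- step 1 : b is not in the image cone
  have hnotmem : b ∉ (orthant (V × V)).map L := by
    intro hmem
    rw [ProperCone.mem_map, PointedCone.mem_closure] at hmem
    rw [mem_closure_iff_seq_limit] at hmem
    obtain ⟨seq, hseqmem, htends⟩ := hmem
    have hseq' : ∀ n, ∃ π : EuclideanSpace ℝ (V × V),
        (∀ i, 0 ≤ π i) ∧ Lmap d π = seq n := by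
      intro n
      have := hseqmem n
      rw [PointedCone.coe_map] at this
      obtain ⟨π, hπ, hπeq⟩ := this
      exact ⟨π, hπ, hπeq⟩
    choose p hpK hpL using hseq'
    -- total masses converge to 1
    set g : EuclideanSpace ℝ (V ⊕ V ⊕ Unit) → ℝ := fun z => ∑ u, z (Sum.inl u) with hgdef
    have hgcont : Continuous g := continuous_finset_sum _ fun u _ => eval_continuous _
    have hgb : g b = 1 := by simp only [hgdef, hb1, hμ1]
    have hgt : Tendsto (fun n => g (seq n)) atTop (𝓝 1) := by
      rw [← hgb]; exact (hgcont.tendsto b).comp htends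
    have hev : ∀ᶠ n in atTop, g (seq n) < 2 :=
      hgt.eventually_lt_const (by norm_num)
    rw [eventually_atTop] at hev
    obtain ⟨N, hN⟩ := hev
    have hmass : ∀ n, ∑ i : V × V, p n i = g (seq n) := by
      intro n
      rw [← hpL n]
      simp only [hgdef, Lmap_apply_inl]
      rw [Fintype.sum_prod_type]
    -- compact set
    set C : Set (EuclideanSpace ℝ (V × V)) :=
      {π | ∀ i, 0 ≤ π i} ∩ {π | ∑ i, π i ≤ 2} with hCdef
    have hCcl : IsClosed C := by
      refine IsClosed.inter (orthant (V × V)).isClosed ?_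
      exact isClosed_le (continuous_finset_sum _ fun i _ => eval_continuous i) continuous_const
    have hCbd : Bornology.IsBounded C := by
      rw [Metric.isBounded_iff_subset_closedBall 0]
      refine ⟨Real.sqrt (4 * Fintype.card (V × V)), fun π hπ => ?_⟩
      rw [Metric.mem_closedBall, dist_zero_right, EuclideanSpace.norm_eq]
      refine Real.sqrt_le_sqrt ?_
      have hle : ∀ i, π i ≤ 2 := fun i =>
        le_trans (Finset.single_le_sum (f := fun j => π j) (fun j _ => hπ.1 j) (mem_univ i)) hπ.2
      calc ∑ i, ‖π i‖ ^ 2 ≤ ∑ _i : V × V, (4:ℝ) := by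
            refine Finset.sum_le_sum fun i _ => ?_
            have h1 : ‖π i‖ ≤ 2 := by
              rw [Real.norm_eq_abs, abs_le]; exact ⟨by linarith [hπ.1 i], hle i⟩
            nlinarith [norm_nonneg (π i)]
        _ = 4 * Fintype.card (V × V) := by
            rw [Finset.sum_const, nsmul_eq_mul, Finset.card_univ]; ring
    have hC : IsCompact C := Metric.isCompact_of_isClosed_isBounded hCcl hCbd
    have hσmem : ∀ k, p (k + N) ∈ C := by
      intro k
      refine ⟨hpK (k + N), ?_⟩
      show ∑ i : V × V, p (k + N) i ≤ 2
      rw [hmass]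
      exact le_of_lt (hN (k + N) (Nat.le_add_left N k))
    obtain ⟨a, haC, φ, hφ, hlim⟩ := hC.tendsto_subseq hσmem
    have h1 : Tendsto (fun k => L (p (φ k + N))) atTop (𝓝 (L a)) :=
      (L.continuous.tendsto a).comp hlim
    have h2 : Tendsto (fun k => L (p (φ k + N))) atTop (𝓝 b) := by
      have heq : (fun k => L (p (φ k + N))) = fun k => seq (φ k + N) := by
        funext k; rw [hLapp, hpL]
      rw [heq]
      exact htends.comp ((tendsto_add_atTop_nat N).comp hφ.tendsto_atTop)
    have hLa : Lmap d a = b := by rw [← hLapp]; exact tendsto_nhds_unique h1 h2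
    -- a is a coupling with too-small cost
    have hcoup : IsCoupling μ ν (fun u v => a (u, v)) := by
      refine ⟨fun u v => haC.1 (u, v), fun u => ?_, fun v => ?_⟩
      · rw [← Lmap_apply_inl d a u, hLa, hb1]
      · rw [← Lmap_apply_inrl d a v, hLa, hb2]
    have hcost : ∑ u, ∑ v, a (u, v) * d u v = W1 d μ ν - ε := by
      rw [← Lmap_apply_inrr d a (), hLa, hb3]
    have := W1_le_cost d μ ν hnn hcoup
    rw [hcost] at this
    linarith
  -- step 2 : Farkas
  obtain ⟨w, hwdual, hwb⟩ := (orthant (V × V)).hyperplane_separation_of_notMem hnotmem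
  set G : V → ℝ := fun u => w (Sum.inl u) with hGdef
  set H : V → ℝ := fun v => w (Sum.inr (Sum.inl v)) with hHdef
  set t : ℝ := w (Sum.inr (Sum.inr ())) with htdef
  -- the dual inequalities
  have hineq : ∀ u v, 0 ≤ G u + H v + t * d u v := by
    intro u v
    have hsingle : EuclideanSpace.single (u, v) (1:ℝ) ∈ orthant (V × V) := by
      intro i
      rw [EuclideanSpace.single_apply]
      split_ifs <;> norm_num
    have h0 : 0 ≤ ⟪EuclideanSpace.single (u, v) (1:ℝ),
        ContinuousLinearMap.adjoint L w⟫_ℝ := by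
      rw [ProperCone.mem_innerDual] at hwdual
      exact hwdual hsingle
    rw [real_inner_comm, ContinuousLinearMap.adjoint_inner_left] at h0
    have hexp : ⟪w, L (EuclideanSpace.single (u, v) (1:ℝ))⟫_ℝ = G u + H v + t * d u v := by
      rw [PiLp.inner_apply]
      simp only [RCLike.inner_apply, conj_trivial]
      rw [Fintype.sum_sum_type, Fintype.sum_sum_type]
      have esingle : ∀ u' v' : V, (EuclideanSpace.single (u, v) (1:ℝ)) (u', v')
          = if u' = u then (if v' = v then 1 else 0) else 0 := by
        intro u' v'
        rw [EuclideanSpace.single_apply]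
        by_cases h1 : u' = u <;> by_cases h2 : v' = v <;> simp [Prod.ext_iff, h1, h2]
      have e1 : ∀ u' : V, L (EuclideanSpace.single (u, v) (1:ℝ)) (Sum.inl u')
          = if u' = u then 1 else 0 := by
        intro u'
        rw [hLapp, Lmap_apply_inl]
        by_cases h1 : u' = u <;> simp [esingle, h1]
      have e2 : ∀ v' : V, L (EuclideanSpace.single (u, v) (1:ℝ)) (Sum.inr (Sum.inl v'))
          = if v' = v then 1 else 0 := by
        intro v'
        rw [hLapp, Lmap_apply_inrl]
        by_cases h2 : v' = v <;> simp [esingle, h2]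
      have e3 : L (EuclideanSpace.single (u, v) (1:ℝ)) (Sum.inr (Sum.inr ()))
          = d u v := by
        rw [hLapp, Lmap_apply_inrr]
        have h5 : ∀ i : V × V, (EuclideanSpace.single (u, v) (1:ℝ)) i * d i.1 i.2
            = if i = (u, v) then d u v else 0 := by
          intro i
          rw [EuclideanSpace.single_apply]
          by_cases h1 : i = (u, v)
          · subst h1; simp
          · simp [h1]
        have h6 : ∑ u' : V, ∑ v' : V, (EuclideanSpace.single (u, v) (1:ℝ)) (u', v') * d u' v'
            = ∑ i : V × V, (EuclideanSpace.single (u, v) (1:ℝ)) i * d i.1 i.2 := by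
          rw [Fintype.sum_prod_type]
        rw [h6, Finset.sum_congr rfl fun i _ => h5 i,
          Finset.sum_ite_eq' univ (u, v) fun _ => d u v]
        simp
      have e4 : ∑ z : Unit, w (Sum.inr (Sum.inr z)) *
          L (EuclideanSpace.single (u, v) (1:ℝ)) (Sum.inr (Sum.inr z)) = t * d u v := by
        rw [Fintype.sum_unique, e3]
      simp only [e1, e2, ite_mul, one_mul, zero_mul]
      rw [Finset.sum_ite_eq' univ u (fun u' => w (Sum.inl u')),
        Finset.sum_ite_eq' univ v (fun v' => w (Sum.inr (Sum.inl v'))), Fintype.sum_unique, e3]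
      simp only [mem_univ, if_true, hGdef, hHdef, htdef]
      ring
    rw [hexp] at h0
    exact h0
  -- the strict inequality
  have hwbexp : (∑ u, G u * μ u) + (∑ v, H v * ν v) + t * (W1 d μ ν - ε) < 0 := by
    have : ⟪b, w⟫_ℝ = (∑ u, G u * μ u) + (∑ v, H v * ν v) + t * (W1 d μ ν - ε) := by
      rw [PiLp.inner_apply]
      simp only [RCLike.inner_apply, conj_trivial, Fintype.sum_sum_type, Fintype.sum_unique,
        hb1, hb2, hb3, hGdef, hHdef, htdef]
      ring
    rw [← this]
    exact hwb
  -- t is positive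
  have hcost0 : W1 d μ ν ≤ ∑ u, ∑ v, μ u * ν v * d u v :=
    W1_le_cost d μ ν hnn (prod_coupling μ ν hμ0 hν0 hμ1 hν1)
  have hsumpos : 0 ≤ (∑ u, G u * μ u) + (∑ v, H v * ν v)
      + t * (∑ u, ∑ v, μ u * ν v * d u v) := by
    have h0 : 0 ≤ ∑ u, ∑ v, μ u * ν v * (G u + H v + t * d u v) :=
      Finset.sum_nonneg fun u _ => Finset.sum_nonneg fun v _ =>
        mul_nonneg (mul_nonneg (hμ0 u) (hν0 v)) (hineq u v)
    have A1 : (∑ u, G u * μ u) = ∑ u, ∑ v, μ u * ν v * G u := by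
      refine Finset.sum_congr rfl fun u _ => ?_
      calc G u * μ u = (G u * μ u) * ∑ v, ν v := by rw [hν1, mul_one]
        _ = ∑ v, μ u * ν v * G u := by
            rw [Finset.mul_sum]
            exact Finset.sum_congr rfl fun v _ => by ring
    have A2 : (∑ v, H v * ν v) = ∑ u, ∑ v, μ u * ν v * H v := by
      calc ∑ v, H v * ν v = (∑ u, μ u) * ∑ v, H v * ν v := by rw [hμ1, one_mul]
        _ = ∑ u, μ u * ∑ v, H v * ν v := Finset.sum_mul _ _ _
        _ = ∑ u, ∑ v, μ u * ν v * H v := by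
            refine Finset.sum_congr rfl fun u _ => ?_
            rw [Finset.mul_sum]
            exact Finset.sum_congr rfl fun v _ => by ring
    have A3 : t * (∑ u, ∑ v, μ u * ν v * d u v) = ∑ u, ∑ v, μ u * ν v * (t * d u v) := by
      rw [Finset.mul_sum]
      refine Finset.sum_congr rfl fun u _ => ?_
      rw [Finset.mul_sum]
      exact Finset.sum_congr rfl fun v _ => by ring
    have hex : ∑ u, ∑ v, μ u * ν v * (G u + H v + t * d u v)
        = (∑ u, G u * μ u) + (∑ v, H v * ν v) + t * (∑ u, ∑ v, μ u * ν v * d u v) := by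
      rw [A1, A2, A3, ← Finset.sum_add_distrib, ← Finset.sum_add_distrib]
      refine Finset.sum_congr rfl fun u _ => ?_
      rw [← Finset.sum_add_distrib, ← Finset.sum_add_distrib]
      refine Finset.sum_congr rfl fun v _ => ?_
      ring
    rw [← hex]
    exact h0
  have ht : 0 < t := by nlinarith
  -- define the potential
  set φf : V → ℝ := fun z => univ.inf' univ_nonempty (fun u => G u + t * d u z) with hφdef
  have hφle : ∀ z, φf z ≤ G z := by
    intro z
    calc φf z ≤ G z + t * d z z := Finset.inf'_le _ (mem_univ z)
      _ = G z := by rw [hrefl, mul_zero, add_zero]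
  have hφge : ∀ z, -H z ≤ φf z := by
    intro z
    refine Finset.le_inf' _ _ fun u _ => ?_
    have := hineq u z
    linarith
  have hφlip : ∀ u v, φf v ≤ φf u + t * d u v := by
    intro u v
    obtain ⟨u₀, _, hu₀⟩ := Finset.exists_mem_eq_inf' univ_nonempty (fun z => G z + t * d z u)
    have h1 : φf v ≤ G u₀ + t * d u₀ v := Finset.inf'_le _ (mem_univ u₀)
    have h2 : d u₀ v ≤ d u₀ u + d u v := htri u₀ u v
    have h3 : φf u = G u₀ + t * d u₀ u := hu₀
    nlinarith
  refine ⟨fun z => φf z / t, fun u v => ?_, ?_⟩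
  · rw [div_sub_div_same, div_le_iff₀ ht]
    have := hφlip u v
    nlinarith
  · have hS1 : ∑ z, (φf z / t) * ν z ≥ ∑ z, (-H z / t) * ν z :=
      Finset.sum_le_sum fun z _ => mul_le_mul_of_nonneg_right
        ((div_le_div_iff_of_pos_right ht).mpr (hφge z)) (hν0 z)
    have hS2 : ∑ z, (φf z / t) * μ z ≤ ∑ z, (G z / t) * μ z :=
      Finset.sum_le_sum fun z _ => mul_le_mul_of_nonneg_right
        ((div_le_div_iff_of_pos_right ht).mpr (hφle z)) (hμ0 z)
    have e1 : ∑ z, (-H z / t) * ν z = -(∑ v, H v * ν v) / t := by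
      rw [eq_div_iff (ne_of_gt ht), Finset.sum_mul, ← Finset.sum_neg_distrib]
      refine Finset.sum_congr rfl fun z _ => ?_
      field_simp
    have e2 : ∑ z, (G z / t) * μ z = (∑ u, G u * μ u) / t := by
      rw [eq_div_iff (ne_of_gt ht), Finset.sum_mul]
      refine Finset.sum_congr rfl fun z _ => ?_
      field_simp
    rw [e1] at hS1
    rw [e2] at hS2
    have hkey : -(∑ v, H v * ν v) - (∑ u, G u * μ u) > t * (W1 d μ ν - ε) := by linarith
    have hfin : -(∑ v, H v * ν v) / t - (∑ u, G u * μ u) / t > W1 d μ ν - ε := by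
      have heq : -(∑ v, H v * ν v) / t - (∑ u, G u * μ u) / t
          = (-(∑ v, H v * ν v) - (∑ u, G u * μ u)) / t := by ring
      rw [heq, gt_iff_lt, lt_div_iff₀ ht]
      have := mul_comm t (W1 d μ ν - ε)
      linarith [hkey, this.symm ▸ hkey]
    linarith


section Main

variable [Nonempty V]

lemma lazy_nonneg (Pb : V → V → ℝ) (hPnn : ∀ x y, 0 ≤ Pb x y) {α : ℝ}
    (hα : α ∈ Set.Ico (0:ℝ) 1) (x z : V) : 0 ≤ lazyDist Pb α x z := by
  unfold lazyDist
  split_ifs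
  · exact hα.1
  · exact mul_nonneg (by linarith [hα.2]) (hPnn x z)

lemma lazy_sum (Pb : V → V → ℝ) (hProw : ∀ x, ∑ y, Pb x y = 1)
    (hPdiag : ∀ x, Pb x x = 0) (α : ℝ) (x : V) :
    ∑ z, lazyDist Pb α x z = 1 := by
  unfold lazyDist
  rw [← Finset.sum_erase_add _ _ (mem_univ x)]
  rw [if_pos rfl]
  have h1 : ∑ z ∈ univ.erase x, (if z = x then α else (1 - α) * Pb x z)
      = ∑ z ∈ univ.erase x, (1 - α) * Pb x z := by
    refine Finset.sum_congr rfl fun z hz => ?_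
    rw [if_neg (Finset.ne_of_mem_erase hz)]
  rw [h1, ← Finset.mul_sum, Finset.sum_erase_eq_sub (mem_univ x), hProw, hPdiag]
  ring

lemma lazy_pairing (Pb : V → V → ℝ) (hPdiag : ∀ x, Pb x x = 0) (α : ℝ) (x : V) (f : V → ℝ) :
    ∑ z, f z * lazyDist Pb α x z = α * f x + (1 - α) * ∑ u, Pb x u * f u := by
  unfold lazyDist
  rw [← Finset.sum_erase_add _ _ (mem_univ x)]
  rw [if_pos rfl]
  have h1 : ∑ z ∈ univ.erase x, f z * (if z = x then α else (1 - α) * Pb x z)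
      = ∑ z ∈ univ.erase x, (1 - α) * (Pb x z * f z) := by
    refine Finset.sum_congr rfl fun z hz => ?_
    rw [if_neg (Finset.ne_of_mem_erase hz)]
    ring
  rw [h1, ← Finset.mul_sum, Finset.sum_erase_eq_sub (mem_univ x), hPdiag]
  ring

end Main

/-- `κ_α(x,y)/(1−α)` equals the infimum over 1-Lipschitz `f` of
`(1/(1−α))(1 − ∇_{xy}f) + ∇_{xy}ℒf`. -/
theorem kappaAlpha_inf_formula [Nonempty V] (d : V → V → ℝ)
    (hnn : ∀ x y, 0 ≤ d x y)
    (hrefl : ∀ x, d x x = 0)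
    (htri : ∀ x y z, d x z ≤ d x y + d y z)
    (Pb : V → V → ℝ) (hPnn : ∀ x y, 0 ≤ Pb x y) (hProw : ∀ x, ∑ y, Pb x y = 1)
    (hPdiag : ∀ x, Pb x x = 0)
    (α : ℝ) (hα : α ∈ Set.Ico (0:ℝ) 1)
    (x y : V) (hxy : x ≠ y) (hd : 0 < d x y) :
    kappaAlpha d Pb α x y / (1 - α)
      = sInf {r | ∃ f : V → ℝ, (∀ u v, f v - f u ≤ d u v) ∧
          r = (1 / (1 - α)) * (1 - (f y - f x) / d x y)
              + ((f y - ∑ u, Pb y u * f u) - (f x - ∑ u, Pb x u * f u)) / d x y} := by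
  classical
  obtain ⟨hα0, hα1⟩ := hα
  have h1α : (0:ℝ) < 1 - α := by linarith
  set μx := lazyDist Pb α x with hμx
  set μy := lazyDist Pb α y with hμy
  have hμx0 : ∀ v, 0 ≤ μx v := fun v => lazy_nonneg Pb hPnn ⟨hα0, hα1⟩ x v
  have hμy0 : ∀ v, 0 ≤ μy v := fun v => lazy_nonneg Pb hPnn ⟨hα0, hα1⟩ y v
  have hμx1 : ∑ v, μx v = 1 := lazy_sum Pb hProw hPdiag α x
  have hμy1 : ∑ v, μy v = 1 := lazy_sum Pb hProw hPdiag α y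
  set W := W1 d μx μy with hW
  have hdne : d x y ≠ 0 := ne_of_gt hd
  have h1αne : (1:ℝ) - α ≠ 0 := ne_of_gt h1α
  -- value of the functional for a given f
  have hrval : ∀ f : V → ℝ,
      (1 / (1 - α)) * (1 - (f y - f x) / d x y)
          + ((f y - ∑ u, Pb y u * f u) - (f x - ∑ u, Pb x u * f u)) / d x y
        = (1 - ((∑ z, f z * μy z) - (∑ z, f z * μx z)) / d x y) / (1 - α) := by
    intro f
    rw [hμx, hμy, lazy_pairing Pb hPdiag α x f, lazy_pairing Pb hPdiag α y f]
    field_simp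
    ring
  have hLHS : kappaAlpha d Pb α x y / (1 - α) = (1 - W / d x y) / (1 - α) := rfl
  rw [hLHS]
  -- the target set
  set S : Set ℝ := {r | ∃ f : V → ℝ, (∀ u v, f v - f u ≤ d u v) ∧
      r = (1 / (1 - α)) * (1 - (f y - f x) / d x y)
          + ((f y - ∑ u, Pb y u * f u) - (f x - ∑ u, Pb x u * f u)) / d x y} with hS
  have hlb : ∀ r ∈ S, (1 - W / d x y) / (1 - α) ≤ r := by
    rintro r ⟨f, hf, rfl⟩
    rw [hrval f]
    have hT : (∑ z, f z * μy z) - (∑ z, f z * μx z) ≤ W :=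
      weak_duality d μx μy hnn hμx0 hμy0 hμx1 hμy1 f hf
    have h2 : ((∑ z, f z * μy z) - (∑ z, f z * μx z)) / d x y ≤ W / d x y :=
      div_le_div_of_nonneg_right hT hd.le |>.trans_eq rfl
    have h3 : 1 - W / d x y ≤ 1 - ((∑ z, f z * μy z) - (∑ z, f z * μx z)) / d x y := by
      linarith
    exact div_le_div_of_nonneg_right h3 h1α.le |>.trans_eq rfl
  have hne : S.Nonempty := by
    refine ⟨_, (0 : V → ℝ), fun u v => by simpa using hnn u v, rfl⟩
  have hbdd : BddBelow S := ⟨_, hlb⟩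
  refine le_antisymm (le_csInf hne hlb) ?_
  refine le_of_forall_pos_le_add fun δ hδ => ?_
  set ε := δ * ((1 - α) * d x y) with hε
  have hεpos : 0 < ε := by positivity
  obtain ⟨f, hf, hfval⟩ := strong_duality d hnn hrefl htri μx μy hμx0 hμy0 hμx1 hμy1 hεpos
  have hmem : ((1 / (1 - α)) * (1 - (f y - f x) / d x y)
      + ((f y - ∑ u, Pb y u * f u) - (f x - ∑ u, Pb x u * f u)) / d x y) ∈ S :=
    ⟨f, hf, rfl⟩
  have hstep : sInf S ≤ (1 - ((∑ z, f z * μy z) - (∑ z, f z * μx z)) / d x y) / (1 - α) := by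
    have := csInf_le hbdd hmem
    rwa [hrval f] at this
  have hbound : (1 - ((∑ z, f z * μy z) - (∑ z, f z * μx z)) / d x y) / (1 - α)
      ≤ (1 - W / d x y) / (1 - α) + δ := by
    have hT : W - ε ≤ (∑ z, f z * μy z) - (∑ z, f z * μx z) := hfval
    rw [div_add' _ _ _ h1αne]
    refine div_le_div_of_nonneg_right ?_ h1α.le
    have h4 : (W - δ * ((1 - α) * d x y)) / d x y
        ≤ ((∑ z, f z * μy z) - (∑ z, f z * μx z)) / d x y := by
      refine div_le_div_of_nonneg_right ?_ hd.le
      rw [hε] at hT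
      linarith
    have h5 : (W - δ * ((1 - α) * d x y)) / d x y = W / d x y - δ * (1 - α) := by
      field_simp
    rw [h5] at h4
    linarith
  exact hstep.trans hbound
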